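/- Let m ≥ 2 and let D be an SDP design of order m. Then for any three distinct blocks B₁, B₂, B₃ of D, the cardinality |B₁ ∩ B₂ ∩ B₃| is equal to either 2^(2m−3) − 2^(m−1) or 2^(2m−3) − 2^(m−2). In particular, SDP designs are quasi-3 for blocks. -/

import Mathlib

open Finset
open scoped symmDiff

/-- A square 2-(v,k,λ) design on the point type `α`: the block family `ℬ` consists of
`v` distinct `k`-subsets, every pair of distinct points lies in exactly `lam` blocks,
and (as is automatic for square designs) any two distinct blocks meet in `lam` points. -/
def IsSquareDesign {α : Type*} [Fintype α] [DecidableEq α]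
    (v k lam : ℕ) (ℬ : Finset (Finset α)) : Prop :=
  Fintype.card α = v ∧ ℬ.card = v ∧ (∀ B ∈ ℬ, B.card = k) ∧
  (∀ p q : α, p ≠ q → (ℬ.filter fun B => p ∈ B ∧ q ∈ B).card = lam) ∧
  (∀ B₁ ∈ ℬ, ∀ B₂ ∈ ℬ, B₁ ≠ B₂ → (B₁ ∩ B₂).card = lam)

/-- An SDP design of order `m`: a square 2-(2^(2m), 2^(2m-1)-2^(m-1), 2^(2m-2)-2^(m-1))
design in which the symmetric difference of any three distinct blocks is a block or the
complement of a block. -/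
def IsSDPDesign {α : Type*} [Fintype α] [DecidableEq α]
    (m : ℕ) (ℬ : Finset (Finset α)) : Prop :=
  IsSquareDesign (2^(2*m)) (2^(2*m-1) - 2^(m-1)) (2^(2*m-2) - 2^(m-1)) ℬ ∧
  ∀ B₁ ∈ ℬ, ∀ B₂ ∈ ℬ, ∀ B₃ ∈ ℬ, B₁ ≠ B₂ → B₁ ≠ B₃ → B₂ ≠ B₃ →
    B₁ ∆ B₂ ∆ B₃ ∈ ℬ ∨ (B₁ ∆ B₂ ∆ B₃)ᶜ ∈ ℬ

/-- Inclusion–exclusion identity for the triple symmetric difference. -/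
lemma card_symmDiff3 {α : Type*} [Fintype α] [DecidableEq α] (A B C : Finset α) :
    (A ∆ B ∆ C).card + 2*((A∩B).card + (A∩C).card + (B∩C).card)
      = A.card + B.card + C.card + 4*(A∩B∩C).card := by
  classical
  have h : ∀ s : Finset α, s.card = ∑ x, if x ∈ s then 1 else 0 := by
    intro s
    rw [Finset.card_eq_sum_ones]
    simp [Finset.sum_ite_mem]
  rw [h (A ∆ B ∆ C), h (A∩B), h (A∩C), h (B∩C), h A, h B, h C, h (A∩B∩C)]
  simp only [Finset.mul_sum, ← Finset.sum_add_distrib]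
  apply Finset.sum_congr rfl
  intro x _
  by_cases hA : x ∈ A <;> by_cases hB : x ∈ B <;> by_cases hC : x ∈ C <;>
    simp [Finset.mem_symmDiff, Finset.mem_inter, hA, hB, hC]

theorem sdp_quasi3_for_blocks {m : ℕ} (hm : 2 ≤ m)
    {α : Type*} [Fintype α] [DecidableEq α] {ℬ : Finset (Finset α)}
    (hD : IsSDPDesign m ℬ) :
    ∀ B₁ ∈ ℬ, ∀ B₂ ∈ ℬ, ∀ B₃ ∈ ℬ, B₁ ≠ B₂ → B₁ ≠ B₃ → B₂ ≠ B₃ →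
      (B₁ ∩ B₂ ∩ B₃).card = 2^(2*m-3) - 2^(m-1) ∨
      (B₁ ∩ B₂ ∩ B₃).card = 2^(2*m-3) - 2^(m-2) := by
  obtain ⟨⟨hv, hcard, hk, hpair, hlam⟩, hsdp⟩ := hD
  obtain ⟨n, rfl⟩ : ∃ n, m = n + 2 := ⟨m - 2, by omega⟩
  intro B₁ h1 B₂ h2 B₃ h3 h12 h13 h23
  have hl12 := hlam B₁ h1 B₂ h2 h12
  have hl13 := hlam B₁ h1 B₃ h3 h13
  have hl23 := hlam B₂ h2 B₃ h3 h23
  have hk1 := hk B₁ h1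
  have hk2 := hk B₂ h2
  have hk3 := hk B₃ h3
  have hId := card_symmDiff3 B₁ B₂ B₃
  rw [hl12, hl13, hl23, hk1, hk2, hk3] at hId
  simp only [show 2*(n+2)-1 = 2*n+3 from by omega, show 2*n+4-1 = 2*n+3 from by omega,
    show 2*n+4-2 = 2*n+2 from by omega, show 2*n+4-3 = 2*n+1 from by omega,
    show 2*(n+2)-2 = 2*n+2 from by omega,
    show 2*(n+2)-3 = 2*n+1 from by omega, show n+2-1 = n+1 from by omega,
    show n+2-2 = n from by omega, show 2*(n+2) = 2*n+4 from by omega] at hId hv ⊢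
  set a := 2^n with ha
  set A := 2^(2*n+1) with hA
  have ha0 : 0 < a := Nat.pow_pos (by norm_num)
  have e0 : (2:ℕ)^(n+1) = 2*a := by rw [pow_succ, mul_comm]
  have e2 : (2:ℕ)^(2*n+2) = 2*A := by rw [pow_succ, mul_comm]
  have e3 : (2:ℕ)^(2*n+3) = 4*A := by rw [show 2*n+3 = (2*n+1)+2 from rfl, pow_add]; ring
  have e4 : (2:ℕ)^(2*n+4) = 8*A := by rw [show 2*n+4 = (2*n+1)+3 from rfl, pow_add]; ring
  have hle : 2*a ≤ A := by
    rw [← e0, hA]; exact Nat.pow_le_pow_right (by norm_num) (by omega)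
  rw [e0, e2, e3] at hId
  rcases hsdp B₁ h1 B₂ h2 B₃ h3 h12 h13 h23 with hb | hb
  · have hS := hk _ hb
    simp only [show 2*n+4-1 = 2*n+3 from by omega, show 2*(n+2)-1 = 2*n+3 from by omega,
      show n+2-1 = n+1 from by omega] at hS
    rw [e0, e3] at hS
    left; omega
  · have hS := hk _ hb
    simp only [show 2*n+4-1 = 2*n+3 from by omega, show 2*(n+2)-1 = 2*n+3 from by omega,
      show n+2-1 = n+1 from by omega] at hS
    rw [Finset.card_compl, e0, e3, hv, e4] at hS
    have hle2 : (B₁ ∆ B₂ ∆ B₃).card ≤ 8*A := by rw [← e4, ← hv]; exact Finset.card_le_univ _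
    right; omega
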